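/- arXiv:1201.3723 — 5 statements merged into one kernel-verified Lean document; each statement's English description precedes it below -/
import Mathlib

section
/- Let N be a positive integer, β ∈ (0,1), x ∈ (0,1) with N·x an integer satisfying 0 ≤ N·x ≤ N−1, and let E_1, …, E_N be independent, identically distributed {0,1}-valued random variables with P(E_i = 1) = β. Then P(∑_{i=1}^N E_i > N·x) ≥ (β/(1−β)) · exp(−N·H(x)) · exp(−N·I(x‖β)), where H(x) := −x·ln x − (1−x)·ln(1−x) and I(x‖β) := x·ln(x/β) + (1−x)·ln((1−x)/(1−β)). -/
open MeasureTheory ProbabilityTheory Real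

/-- Lower bound on the probability that more than a fraction `x` of `N` iid Bernoulli(β)
symbol errors occur, in terms of the Bernoulli entropy `H(x)` and the Kullback–Leibler
divergence `I(x‖β)`. -/
theorem stmt_2 {Ω : Type*} [MeasurableSpace Ω] (μ : Measure Ω) [IsProbabilityMeasure μ]
    (N : ℕ) (hN : 0 < N) (β x : ℝ) (hβ : β ∈ Set.Ioo (0 : ℝ) 1) (hx : x ∈ Set.Ioo (0 : ℝ) 1)
    (hint : ∃ k : ℕ, (N : ℝ) * x = (k : ℝ) ∧ k ≤ N - 1)
    (E : Fin N → Ω → ℝ)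
    (hmeas : ∀ i, Measurable (E i))
    (h01 : ∀ i ω, E i ω = 0 ∨ E i ω = 1)
    (hdist : ∀ i, μ {ω | E i ω = 1} = ENNReal.ofReal β)
    (hindep : iIndepFun E μ) :
    ENNReal.ofReal ((β / (1 - β)) *
        Real.exp (-(N : ℝ) * (-(x * Real.log x) - (1 - x) * Real.log (1 - x))) *
        Real.exp (-(N : ℝ) *
          (x * Real.log (x / β) + (1 - x) * Real.log ((1 - x) / (1 - β))))) ≤
      μ {ω | (N : ℝ) * x < ∑ i, E i ω} := by
  obtain ⟨k, hk, hkN⟩ := hint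
  obtain ⟨hβ0, hβ1⟩ := hβ
  obtain ⟨hx0, hx1⟩ := hx
  have h1β : (0:ℝ) < 1 - β := by linarith
  have hkltN : k < N := Nat.lt_of_le_of_lt hkN (Nat.pred_lt hN.ne')
  obtain ⟨m, hm⟩ : ∃ m, N = k + 1 + m := ⟨N - (k + 1), by omega⟩
  -- the value each E i takes on the chosen event
  set c : Fin N → ℝ := fun i => if (i : ℕ) ≤ k then 1 else 0 with hc
  -- probability of each single event
  have h0 : ∀ i, μ {ω | E i ω = 0} = ENNReal.ofReal (1 - β) := by
    intro i
    have hcompl : {ω | E i ω = 0} = {ω | E i ω = 1}ᶜ := by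
      ext ω
      rcases h01 i ω with h | h <;> simp [h]
    have hms : MeasurableSet {ω | E i ω = 1} := hmeas i (measurableSet_singleton 1)
    rw [hcompl, measure_compl hms (measure_ne_top _ _), hdist i, measure_univ]
    rw [ENNReal.ofReal_sub _ hβ0.le]
    simp
  have hsingle : ∀ i, μ {ω | E i ω = c i} =
      if (i : ℕ) ≤ k then ENNReal.ofReal β else ENNReal.ofReal (1 - β) := by
    intro i
    by_cases h : (i : ℕ) ≤ k <;> simp [hc, h, hdist i, h0 i]
  have hcard1 : (Finset.univ.filter (fun i : Fin N => (i : ℕ) ≤ k)).card = k + 1 := by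
    have he : (Finset.univ.filter (fun i : Fin N => (i : ℕ) ≤ k)) =
        Finset.Iic (⟨k, hkltN⟩ : Fin N) := by
      ext i
      simp [Fin.le_def]
    rw [he, Fin.card_Iic]
  -- event inclusion
  have hsub : (⋂ i, {ω | E i ω = c i}) ⊆ {ω | (N : ℝ) * x < ∑ i, E i ω} := by
    intro ω hω
    simp only [Set.mem_iInter, Set.mem_setOf_eq] at hω ⊢
    have hsum : ∑ i, E i ω = (k + 1 : ℕ) := by
      calc ∑ i, E i ω = ∑ i : Fin N, c i := by
            exact Finset.sum_congr rfl fun i _ => hω i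
        _ = ∑ i : Fin N, if (i : ℕ) ≤ k then (1:ℝ) else 0 := rfl
        _ = ((Finset.univ.filter (fun i : Fin N => (i : ℕ) ≤ k)).card : ℝ) := by
            rw [← Finset.sum_filter]; simp
        _ = (k + 1 : ℕ) := by rw [hcard1]
    rw [hsum, hk]
    push_cast
    linarith
  -- measure of the intersection
  have hmeasInt : μ (⋂ i, {ω | E i ω = c i}) =
      ENNReal.ofReal β ^ (k + 1) * ENNReal.ofReal (1 - β) ^ m := by
    rw [hindep.meas_iInter (s := fun i => {ω | E i ω = c i})
      (fun i => ⟨{c i}, measurableSet_singleton _, rfl⟩)]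
    calc ∏ i, μ {ω | E i ω = c i}
        = ∏ i : Fin N, (if (i : ℕ) ≤ k then ENNReal.ofReal β else ENNReal.ofReal (1 - β)) :=
          Finset.prod_congr rfl fun i _ => hsingle i
      _ = ENNReal.ofReal β ^ (Finset.univ.filter (fun i : Fin N => (i : ℕ) ≤ k)).card *
          ENNReal.ofReal (1 - β) ^
            (Finset.univ.filter (fun i : Fin N => ¬ (i : ℕ) ≤ k)).card := by
          rw [Finset.prod_ite]
          simp [Finset.prod_const]
      _ = ENNReal.ofReal β ^ (k + 1) * ENNReal.ofReal (1 - β) ^ m := by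
          have h2 : (Finset.univ.filter (fun i : Fin N => ¬ (i : ℕ) ≤ k)).card = m := by
            have := Finset.card_filter_add_card_filter_not
              (s := (Finset.univ : Finset (Fin N))) (p := fun i : Fin N => (i : ℕ) ≤ k)
            simp only [Finset.card_univ, Fintype.card_fin] at this
            omega
          rw [hcard1, h2]
  -- real-number identity for the LHS
  have hlhs : (β / (1 - β)) *
      Real.exp (-(N : ℝ) * (-(x * Real.log x) - (1 - x) * Real.log (1 - x))) *
      Real.exp (-(N : ℝ) *
        (x * Real.log (x / β) + (1 - x) * Real.log ((1 - x) / (1 - β)))) =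
      β ^ (k + 1) * (1 - β) ^ m := by
    rw [mul_assoc, ← Real.exp_add]
    have hlog : -(N : ℝ) * (-(x * Real.log x) - (1 - x) * Real.log (1 - x)) +
        -(N : ℝ) * (x * Real.log (x / β) + (1 - x) * Real.log ((1 - x) / (1 - β))) =
        (k : ℝ) * Real.log β + ((m + 1 : ℕ) : ℝ) * Real.log (1 - β) := by
      rw [Real.log_div hx0.ne' hβ0.ne', Real.log_div (by linarith) h1β.ne']
      have hNm : ((m + 1 : ℕ) : ℝ) = (N : ℝ) - k := by
        subst hm; push_cast; ring
      rw [hNm]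
      linear_combination (Real.log β - Real.log (1 - β)) * hk
    rw [hlog, Real.exp_add, Real.exp_nat_mul, Real.exp_nat_mul,
      Real.exp_log hβ0, Real.exp_log h1β]
    field_simp
    ring
  rw [hlhs, ENNReal.ofReal_mul (by positivity), ENNReal.ofReal_pow hβ0.le,
    ENNReal.ofReal_pow h1β.le, ← hmeasInt]
  exact measure_mono hsub
end

section
/- Let β ∈ (0, 1/2), and define on (β, 1/2) the functions θ*(x) := ln(x/β) − ln((1−x)/(1−β)), I(x) := x·ln(x/β) + (1−x)·ln((1−x)/(1−β)), and g(x) := x·(1−x)·θ*(x)² − I(x). Then g(x) > 0 for every x ∈ (β, 1/2). -/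
open Real

/-- On `(β, 1/2)` the function `g(x) = x(1−x)·θ*(x)² − I(x‖β)` is positive, where
`θ*(x) = ln(x/β) − ln((1−x)/(1−β))` and `I(x‖β)` is the Bernoulli KL divergence. -/
theorem stmt_9 (β : ℝ) (hβ : β ∈ Set.Ioo (0 : ℝ) (1 / 2)) (x : ℝ)
    (hx : x ∈ Set.Ioo β (1 / 2)) :
    0 < x * (1 - x) * (Real.log (x / β) - Real.log ((1 - x) / (1 - β))) ^ 2 -
        (x * Real.log (x / β) + (1 - x) * Real.log ((1 - x) / (1 - β))) := by
  obtain ⟨hβ0, hβ2⟩ := hβ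
  obtain ⟨hx1, hx2⟩ := hx
  have hx0 : (0:ℝ) < x := lt_trans hβ0 hx1
  set θ : ℝ → ℝ := fun y => Real.log y - Real.log (1 - y) -
      (Real.log β - Real.log (1 - β)) with hθ
  set G : ℝ → ℝ := fun y => y * (1 - y) * (θ y) ^ 2 -
      (y * (Real.log y - Real.log β) + (1 - y) * (Real.log (1 - y) - Real.log (1 - β)))
    with hG
  have key : ∀ y ∈ Set.Ioo (0:ℝ) 1,
      HasDerivAt G ((1 - 2*y) * (θ y) ^ 2 + θ y) y := by
    rintro y ⟨hy0, hy1⟩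
    have hy1' : (0:ℝ) < 1 - y := by linarith
    have h1 : HasDerivAt Real.log y⁻¹ y := Real.hasDerivAt_log hy0.ne'
    have h2 : HasDerivAt (fun y : ℝ => Real.log (1 - y)) ((1 - y)⁻¹ * (-1)) y :=
      (Real.hasDerivAt_log hy1'.ne').comp y ((hasDerivAt_id y).const_sub 1)
    have hθd : HasDerivAt θ (y⁻¹ - (1 - y)⁻¹ * (-1)) y := (h1.sub h2).sub_const _
    have hA : HasDerivAt (fun y : ℝ => y * (1 - y)) (1 * (1 - y) + y * (-1)) y :=
      (hasDerivAt_id y).mul ((hasDerivAt_id y).const_sub 1)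
    have hT1 : HasDerivAt (fun y => y * (1 - y) * (θ y) ^ 2)
        ((1 * (1 - y) + y * (-1)) * (θ y) ^ 2 +
          y * (1 - y) * (2 * θ y ^ 1 * (y⁻¹ - (1 - y)⁻¹ * (-1)))) y :=
      hA.mul (hθd.pow 2)
    have hT2 : HasDerivAt
        (fun y => y * (Real.log y - Real.log β) + (1 - y) * (Real.log (1 - y) - Real.log (1 - β)))
        ((1 * (Real.log y - Real.log β) + y * y⁻¹) +
          ((-1) * (Real.log (1 - y) - Real.log (1 - β)) + (1 - y) * ((1 - y)⁻¹ * (-1)))) y :=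
      ((hasDerivAt_id y).mul (h1.sub_const _)).add
        (((hasDerivAt_id y).const_sub 1).mul (h2.sub_const _))
    have := hT1.sub hT2
    convert this using 1
    · rfl
    · rfl
    · rfl
    simp only [hθ]
    field_simp
    ring
  have hsub : Set.Icc β (1/2 : ℝ) ⊆ Set.Ioo (0:ℝ) 1 := by
    rintro y ⟨h1, h2⟩
    exact ⟨lt_of_lt_of_le hβ0 h1, by linarith⟩
  have hcont : ContinuousOn G (Set.Icc β (1/2)) := fun y hy =>
    ((key y (hsub hy)).continuousAt).continuousWithinAt
  have hmono : StrictMonoOn G (Set.Icc β (1/2)) := by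
    apply StrictMonoOn.mono ?_ (subset_refl _)
    apply strictMonoOn_of_deriv_pos (convex_Icc _ _) hcont
    intro y hy
    rw [interior_Icc] at hy
    obtain ⟨hy1, hy2⟩ := hy
    have hy0 : (0:ℝ) < y := lt_trans hβ0 hy1
    rw [(key y ⟨hy0, by linarith⟩).deriv]
    have hθpos : 0 < θ y := by
      have h1 : Real.log β < Real.log y := Real.log_lt_log hβ0 hy1
      have h2 : Real.log (1 - y) < Real.log (1 - β) :=
        Real.log_lt_log (by linarith) (by linarith)
      simp only [hθ]; linarith
    have h12 : 0 < 1 - 2*y := by linarith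
    positivity
  have hGβ : G β = 0 := by
    simp only [hG, hθ]
    ring
  have := hmono (Set.left_mem_Icc.2 (by linarith)) ⟨le_of_lt hx1, le_of_lt hx2⟩ hx1
  rw [hGβ] at this
  have hx1' : (0:ℝ) < 1 - x := by linarith
  have hβ1' : (0:ℝ) < 1 - β := by linarith
  have e1 : Real.log (x / β) = Real.log x - Real.log β := Real.log_div hx0.ne' hβ0.ne'
  have e2 : Real.log ((1 - x) / (1 - β)) = Real.log (1 - x) - Real.log (1 - β) :=
    Real.log_div hx1'.ne' hβ1'.ne'
  rw [e1, e2]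
  have : 0 < G x := this
  simp only [hG, hθ] at this
  nlinarith [this]
end

section
/- Let D > 0. The function (u, v) ↦ ln(1 − exp(−D·e^{u+v})) is jointly concave on ℝ². -/
open Real

private lemma aux_concave (D : ℝ) (hD : 0 < D) :
    ConcaveOn ℝ Set.univ (fun t : ℝ => Real.log (1 - Real.exp (-(D * Real.exp t)))) := by
  set f : ℝ → ℝ := fun t => Real.log (1 - Real.exp (-(D * Real.exp t))) with hf
  have hpos : ∀ t : ℝ, 0 < 1 - Real.exp (-(D * Real.exp t)) := by
    intro t
    have : Real.exp (-(D * Real.exp t)) < 1 := by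
      rw [Real.exp_lt_one_iff]
      have := Real.exp_pos t
      nlinarith
    linarith
  have hderiv : ∀ t : ℝ, HasDerivAt f
      (D * Real.exp t * Real.exp (-(D * Real.exp t)) / (1 - Real.exp (-(D * Real.exp t)))) t := by
    intro t
    have h1 : HasDerivAt (fun t : ℝ => -(D * Real.exp t)) (-(D * Real.exp t)) t := by
      exact ((Real.hasDerivAt_exp t).const_mul D).neg
    have h2 : HasDerivAt (fun t : ℝ => Real.exp (-(D * Real.exp t)))
        (Real.exp (-(D * Real.exp t)) * -(D * Real.exp t)) t := h1.exp
    have h3 : HasDerivAt (fun t : ℝ => 1 - Real.exp (-(D * Real.exp t)))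
        (-(Real.exp (-(D * Real.exp t)) * -(D * Real.exp t))) t := h2.const_sub 1
    have h4 := h3.log (ne_of_gt (hpos t))
    convert h4 using 1
    ring
  set g : ℝ → ℝ := fun t => D * Real.exp t / (Real.exp (D * Real.exp t) - 1) with hg
  have hderiv' : ∀ t : ℝ, HasDerivAt f (g t) t := by
    intro t
    convert hderiv t using 1
    have hE : Real.exp (D * Real.exp t) ≠ 0 := Real.exp_ne_zero _
    have hE1 : Real.exp (D * Real.exp t) - 1 > 0 := by
      have : 1 < Real.exp (D * Real.exp t) := by
        rw [Real.one_lt_exp_iff]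
        positivity
      linarith
    have hne := ne_of_gt (hpos t)
    rw [hg]
    simp only [Real.exp_neg]
    field_simp
  have hderiveq : deriv f = g := funext fun t => (hderiv' t).deriv
  have hanti : AntitoneOn (deriv f) (interior (Set.univ : Set ℝ)) := by
    rw [hderiveq]
    intro t _ s _ hts
    have hx : (0:ℝ) < D * Real.exp t := by positivity
    have hy : (0:ℝ) < D * Real.exp s := by positivity
    have hxy : D * Real.exp t ≤ D * Real.exp s :=
      mul_le_mul_of_nonneg_left (Real.exp_le_exp.2 hts) hD.le
    set x := D * Real.exp t
    set y := D * Real.exp s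
    have hex : (1:ℝ) < Real.exp x := by rw [Real.one_lt_exp_iff]; exact hx
    have hey : (1:ℝ) < Real.exp y := by rw [Real.one_lt_exp_iff]; exact hy
    have hsec : (Real.exp x - Real.exp 0) / (x - 0) ≤ (Real.exp y - Real.exp 0) / (y - 0) :=
      convexOn_exp.secant_mono (Set.mem_univ 0) (Set.mem_univ x) (Set.mem_univ y)
        (ne_of_gt hx) (ne_of_gt hy) hxy
    simp only [Real.exp_zero, sub_zero] at hsec
    rw [div_le_div_iff₀ hx hy] at hsec
    show y / (Real.exp y - 1) ≤ x / (Real.exp x - 1)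
    rw [div_le_div_iff₀ (by linarith) (by linarith)]
    nlinarith
  have hcont : ContinuousOn f Set.univ := by
    apply ContinuousOn.log
    · fun_prop
    · intro t _; exact ne_of_gt (hpos t)
  have hdiff : DifferentiableOn ℝ f (interior (Set.univ : Set ℝ)) :=
    fun t _ => (hderiv' t).differentiableAt.differentiableWithinAt
  exact hanti.concaveOn_of_deriv convex_univ hcont hdiff

/-- For `D > 0`, the function `(u, v) ↦ ln(1 − exp(−D·e^{u+v}))` is jointly concave on `ℝ²`. -/
theorem stmt_12 (D : ℝ) (hD : 0 < D) :
    ConcaveOn ℝ Set.univ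
      (fun p : ℝ × ℝ => Real.log (1 - Real.exp (-(D * Real.exp (p.1 + p.2))))) := by
  have hf := aux_concave D hD
  constructor
  · exact convex_univ
  · intro x _ y _ a b ha hb hab
    have h := hf.2 (Set.mem_univ (x.1 + x.2)) (Set.mem_univ (y.1 + y.2)) ha hb hab
    simp only [smul_eq_mul] at h ⊢
    have : (a • x + b • y).1 + (a • x + b • y).2 = a * (x.1 + x.2) + b * (y.1 + y.2) := by
      simp [Prod.add_def, Prod.smul_def, smul_eq_mul]; ring
    rw [this]
    exact h
end

section
/- Let β ∈ (0, 1/2) and let I : (β, 1/2) → ℝ be given by I(x) := x·ln(x/β) + (1−x)·ln((1−x)/(1−β)). Then I is a strictly increasing continuous bijection from (β, 1/2) onto (0, I(1/2)), and the function Ĩ ↦ I⁻¹(e^{Ĩ}) is convex on the interval (−∞, ln I(1/2)). -/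
open Real

open Set

noncomputable def kl (β x : ℝ) : ℝ :=
  x * Real.log (x / β) + (1 - x) * Real.log ((1 - x) / (1 - β))

noncomputable def klL (β x : ℝ) : ℝ :=
  Real.log (x / β) - Real.log ((1 - x) / (1 - β))

lemma hasDerivAt_log_div₁ {β x : ℝ} (hb0 : β ≠ 0) (hx0 : x ≠ 0) :
    HasDerivAt (fun y : ℝ => Real.log (y / β)) (1 / x) x := by
  have hinner : HasDerivAt (fun y : ℝ => y / β) (1 / β) x := by
    simpa using (hasDerivAt_id x).div_const β
  have := (Real.hasDerivAt_log (div_ne_zero hx0 hb0)).comp x hinner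
  have heq : (x / β)⁻¹ * (1 / β) = 1 / x := by field_simp
  rw [heq] at this
  exact this

lemma hasDerivAt_log_div₂ {β x : ℝ} (hb1 : (1:ℝ) - β ≠ 0) (hx1 : (1:ℝ) - x ≠ 0) :
    HasDerivAt (fun y : ℝ => Real.log ((1 - y) / (1 - β))) (-(1 / (1 - x))) x := by
  have hinner : HasDerivAt (fun y : ℝ => (1 - y) / (1 - β)) (-1 / (1 - β)) x := by
    simpa using ((hasDerivAt_id x).const_sub 1).div_const (1 - β)
  have := (Real.hasDerivAt_log (div_ne_zero hx1 hb1)).comp x hinner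
  have heq : ((1 - x) / (1 - β))⁻¹ * (-1 / (1 - β)) = -(1 / (1 - x)) := by field_simp
  rw [heq] at this
  exact this

lemma hasDerivAt_klL {β x : ℝ} (hb0 : β ≠ 0) (hb1 : (1:ℝ) - β ≠ 0)
    (hx0 : x ≠ 0) (hx1 : (1:ℝ) - x ≠ 0) :
    HasDerivAt (klL β) (1 / x + 1 / (1 - x)) x := by
  have := (hasDerivAt_log_div₁ hb0 hx0).sub (hasDerivAt_log_div₂ hb1 hx1)
  exact this.congr_deriv (by ring)

lemma hasDerivAt_kl {β x : ℝ} (hb0 : β ≠ 0) (hb1 : (1:ℝ) - β ≠ 0)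
    (hx0 : x ≠ 0) (hx1 : (1:ℝ) - x ≠ 0) :
    HasDerivAt (kl β) (klL β x) x := by
  have h1 := (hasDerivAt_id x).mul (hasDerivAt_log_div₁ hb0 hx0)
  have h2 := ((hasDerivAt_id x).const_sub 1).mul (hasDerivAt_log_div₂ hb1 hx1)
  have := h1.add h2
  simp only [id_eq] at this
  have heq : 1 * Real.log (x / β) + x * (1 / x) +
      (-1 * Real.log ((1 - x) / (1 - β)) + (1 - x) * -(1 / (1 - x))) = klL β x := by
    unfold klL
    field_simp
    ring
  rw [heq] at this
  exact this

example : True := trivial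

noncomputable def klF (β x : ℝ) : ℝ := x * (1 - x) * (klL β x) ^ 2 - kl β x

lemma hasDerivAt_klF {β x : ℝ} (hb0 : β ≠ 0) (hb1 : (1:ℝ) - β ≠ 0)
    (hx0 : x ≠ 0) (hx1 : (1:ℝ) - x ≠ 0) :
    HasDerivAt (klF β) ((1 - 2 * x) * (klL β x) ^ 2 + klL β x) x := by
  have hq : HasDerivAt (fun y : ℝ => y * (1 - y)) (1 - 2 * x) x := by
    have := (hasDerivAt_id x).mul ((hasDerivAt_id x).const_sub 1)
    simp only [id_eq, one_mul] at this
    exact this.congr_deriv (by ring)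
  have hL2 : HasDerivAt (fun y => (klL β y) ^ 2)
      (2 * klL β x * (1 / x + 1 / (1 - x))) x := by
    have := (hasDerivAt_klL hb0 hb1 hx0 hx1).pow 2
    exact this.congr_deriv (by norm_num)
  have := (hq.mul hL2).sub (hasDerivAt_kl hb0 hb1 hx0 hx1)
  have heq : (1 - 2 * x) * (klL β x) ^ 2 + x * (1 - x) * (2 * klL β x * (1 / x + 1 / (1 - x)))
      - klL β x = (1 - 2 * x) * (klL β x) ^ 2 + klL β x := by
    have h : x * (1 - x) * (2 * klL β x * (1 / x + 1 / (1 - x))) = 2 * klL β x := by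
      field_simp
      ring
    rw [h]; ring
  rw [heq] at this
  exact this

/-- For `β ∈ (0,1/2)`, the KL divergence `I(x) = x·ln(x/β) + (1−x)·ln((1−x)/(1−β))` is a
strictly increasing continuous bijection from `(β, 1/2)` onto `(0, I(1/2))`, and any
inverse map `Ĩ ↦ I⁻¹(e^Ĩ)` is convex on `(−∞, ln I(1/2))`. -/
theorem stmt_13 (β : ℝ) (hβ : β ∈ Set.Ioo (0 : ℝ) (1 / 2))
    (I : ℝ → ℝ)
    (hI : ∀ x, I x = x * Real.log (x / β) + (1 - x) * Real.log ((1 - x) / (1 - β))) :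
    StrictMonoOn I (Set.Ioo β (1 / 2)) ∧
    ContinuousOn I (Set.Ioo β (1 / 2)) ∧
    I '' Set.Ioo β (1 / 2) = Set.Ioo 0 (I (1 / 2)) ∧
    ∀ xinv : ℝ → ℝ,
      (∀ It ∈ Set.Iio (Real.log (I (1 / 2))),
        xinv It ∈ Set.Ioo β (1 / 2) ∧ I (xinv It) = Real.exp It) →
      ConvexOn ℝ (Set.Iio (Real.log (I (1 / 2)))) xinv := by
  obtain ⟨hb0, hb2⟩ := hβ
  have hIf : I = kl β := funext hI
  subst hIf
  have hb0' : β ≠ 0 := hb0.ne'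
  have hb1 : β < 1 := by linarith
  have hb1' : (1 : ℝ) - β ≠ 0 := by linarith
  -- basic facts
  have hx01 : ∀ x ∈ Icc β (1 / 2), x ≠ 0 ∧ (1 : ℝ) - x ≠ 0 := by
    intro x hx
    constructor
    · have : 0 < x := lt_of_lt_of_le hb0 hx.1
      exact this.ne'
    · have : x < 1 := lt_of_le_of_lt hx.2 (by norm_num)
      intro h; nlinarith
  have hcont : ContinuousOn (kl β) (Icc β (1 / 2)) := by
    intro x hx
    obtain ⟨h1, h2⟩ := hx01 x hx
    exact (hasDerivAt_kl hb0' hb1' h1 h2).continuousAt.continuousWithinAt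
  have hLpos : ∀ x ∈ Ioo β (1 / 2), 0 < klL β x := by
    intro x hx
    have h1 : 0 < Real.log (x / β) := Real.log_pos ((one_lt_div hb0).2 hx.1)
    have h2 : Real.log ((1 - x) / (1 - β)) < 0 := by
      apply Real.log_neg
      · apply div_pos (by linarith [hx.2]) (by linarith)
      · rw [div_lt_one (by linarith)]
        linarith [hx.1]
    unfold klL; linarith
  have hmono : StrictMonoOn (kl β) (Icc β (1 / 2)) := by
    apply strictMonoOn_of_deriv_pos (convex_Icc _ _) hcont
    intro x hx
    rw [interior_Icc] at hx
    obtain ⟨h1, h2⟩ := hx01 x (Ioo_subset_Icc_self hx)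
    rw [(hasDerivAt_kl hb0' hb1' h1 h2).deriv]
    exact hLpos x hx
  have hkl0 : kl β β = 0 := by simp [kl, div_self hb0', div_self hb1']
  have hL0 : klL β β = 0 := by simp [klL, div_self hb0', div_self hb1']
  have hβIcc : β ∈ Icc β (1 / 2) := left_mem_Icc.2 (by linarith)
  have hhalfIcc : (1 : ℝ) / 2 ∈ Icc β (1 / 2) := right_mem_Icc.2 (by linarith)
  have hklpos : ∀ x ∈ Ioc β (1 / 2), 0 < kl β x := by
    intro x hx
    have := hmono hβIcc ⟨hx.1.le, hx.2⟩ hx.1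
    rwa [hkl0] at this
  -- F nonneg
  have hFmono : MonotoneOn (klF β) (Icc β (1 / 2)) := by
    apply monotoneOn_of_deriv_nonneg (convex_Icc _ _)
    · intro x hx
      obtain ⟨h1, h2⟩ := hx01 x hx
      exact (hasDerivAt_klF hb0' hb1' h1 h2).continuousAt.continuousWithinAt
    · intro x hx
      rw [interior_Icc] at hx
      obtain ⟨h1, h2⟩ := hx01 x (Ioo_subset_Icc_self hx)
      exact (hasDerivAt_klF hb0' hb1' h1 h2).differentiableAt.differentiableWithinAt
    · intro x hx
      rw [interior_Icc] at hx
      obtain ⟨h1, h2⟩ := hx01 x (Ioo_subset_Icc_self hx)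
      rw [(hasDerivAt_klF hb0' hb1' h1 h2).deriv]
      have hL := hLpos x hx
      have h3 : 0 ≤ (1 - 2 * x) * (klL β x) ^ 2 :=
        mul_nonneg (by linarith [hx.2]) (sq_nonneg _)
      linarith
  have hF0 : klF β β = 0 := by simp [klF, hL0, hkl0]
  have hFnonneg : ∀ x ∈ Ioo β (1 / 2), 0 ≤ klF β x := by
    intro x hx
    have := hFmono hβIcc ⟨hx.1.le, hx.2.le⟩ hx.1.le
    rwa [hF0] at this
  -- derivatives of g = log ∘ kl and h = L / kl
  have hg' : ∀ x ∈ Ioo β (1 / 2), HasDerivAt (fun y => Real.log (kl β y))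
      (klL β x / kl β x) x := by
    intro x hx
    obtain ⟨h1, h2⟩ := hx01 x (Ioo_subset_Icc_self hx)
    exact (hasDerivAt_kl hb0' hb1' h1 h2).log (hklpos x ⟨hx.1, hx.2.le⟩).ne'
  have hh' : ∀ x ∈ Ioo β (1 / 2), HasDerivAt (fun y => klL β y / kl β y)
      (((1 / x + 1 / (1 - x)) * kl β x - klL β x * klL β x) / (kl β x) ^ 2) x := by
    intro x hx
    obtain ⟨h1, h2⟩ := hx01 x (Ioo_subset_Icc_self hx)
    exact (hasDerivAt_klL hb0' hb1' h1 h2).div (hasDerivAt_kl hb0' hb1' h1 h2)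
      (hklpos x ⟨hx.1, hx.2.le⟩).ne'
  have hanti : AntitoneOn (fun y => klL β y / kl β y) (Ioo β (1 / 2)) := by
    apply antitoneOn_of_deriv_nonpos (convex_Ioo _ _)
    · intro x hx
      exact (hh' x hx).continuousAt.continuousWithinAt
    · intro x hx
      rw [isOpen_Ioo.interior_eq] at hx
      exact (hh' x hx).differentiableAt.differentiableWithinAt
    · intro x hx
      rw [isOpen_Ioo.interior_eq] at hx
      rw [(hh' x hx).deriv]
      apply div_nonpos_of_nonpos_of_nonneg _ (sq_nonneg _)
      have hF := hFnonneg x hx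
      have hx0 : 0 < x := lt_trans hb0 hx.1
      have hx1 : x < 1 := by linarith [hx.2]
      unfold klF at hF
      have hprod : 0 < x * (1 - x) := by nlinarith
      have e : (1 / x + 1 / (1 - x)) * kl β x - klL β x * klL β x
          = (kl β x - x * (1 - x) * klL β x ^ 2) / (x * (1 - x)) := by
        have h1x : (1 : ℝ) - x ≠ 0 := by linarith
        field_simp
        ring
      rw [e]
      exact div_nonpos_of_nonpos_of_nonneg (by linarith) hprod.le
  have hconc : ConcaveOn ℝ (Ioo β (1 / 2)) (fun y => Real.log (kl β y)) := by
    apply AntitoneOn.concaveOn_of_deriv (convex_Ioo _ _)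
    · intro x hx
      exact (hg' x hx).continuousAt.continuousWithinAt
    · intro x hx
      rw [isOpen_Ioo.interior_eq] at hx
      exact (hg' x hx).differentiableAt.differentiableWithinAt
    · intro u hu v hv huv
      rw [isOpen_Ioo.interior_eq] at hu hv
      rw [(hg' u hu).deriv, (hg' v hv).deriv]
      exact hanti hu hv huv
  have hgmono : StrictMonoOn (fun y => Real.log (kl β y)) (Ioo β (1 / 2)) := by
    intro u hu v hv huv
    exact Real.log_lt_log (hklpos u ⟨hu.1, hu.2.le⟩)
      (hmono (Ioo_subset_Icc_self hu) (Ioo_subset_Icc_self hv) huv)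
  refine ⟨hmono.mono Ioo_subset_Icc_self, hcont.mono Ioo_subset_Icc_self, ?_, ?_⟩
  · apply Subset.antisymm
    · rintro y ⟨x, hx, rfl⟩
      constructor
      · rw [← hkl0]
        exact hmono hβIcc (Ioo_subset_Icc_self hx) hx.1
      · exact hmono (Ioo_subset_Icc_self hx) hhalfIcc hx.2
    · have := intermediate_value_Ioo (by linarith : β ≤ 1 / 2) hcont
      rwa [hkl0] at this
  · intro xinv hxinv
    refine ⟨convex_Iio _, ?_⟩
    intro a ha b hb t s ht hs hts
    simp only [smul_eq_mul]
    obtain ⟨hu, hfu⟩ := hxinv a ha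
    obtain ⟨hv, hfv⟩ := hxinv b hb
    have hga : Real.log (kl β (xinv a)) = a := by rw [hfu, Real.log_exp]
    have hgb : Real.log (kl β (xinv b)) = b := by rw [hfv, Real.log_exp]
    have hc : t * a + s * b ∈ Iio (Real.log (kl β (1 / 2))) := by
      have := (convex_Iio (Real.log (kl β (1 / 2)))) ha hb ht hs hts
      simpa using this
    obtain ⟨hw, hfw⟩ := hxinv _ hc
    have hgc : Real.log (kl β (xinv (t * a + s * b))) = t * a + s * b := by
      rw [hfw, Real.log_exp]
    have hmem : t * xinv a + s * xinv b ∈ Ioo β (1 / 2) := by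
      have := (convex_Ioo β (1 / 2)) hu hv ht hs hts
      simpa using this
    have hineq : t * a + s * b ≤ Real.log (kl β (t * xinv a + s * xinv b)) := by
      have := hconc.2 hu hv ht hs hts
      simp only [smul_eq_mul] at this
      rw [hga, hgb] at this
      exact this
    have hle : Real.log (kl β (xinv (t * a + s * b)))
        ≤ Real.log (kl β (t * xinv a + s * xinv b)) := by
      rw [hgc]; exact hineq
    exact (hgmono.le_iff_le hw hmem).1 hle
end

section
/- Let β ∈ (0, 1/2) and D > 0, let I : (β, 1/2) → ℝ be I(x) := x·ln(x/β) + (1−x)·ln((1−x)/(1−β)), and let x(Ĩ) := I⁻¹(e^{Ĩ}) for Ĩ < ln I(1/2). Then the function (ñ, Ĩ) ↦ ñ + ln(1 − 2·x(Ĩ)) + ln(1 − exp(−D·e^{ñ+Ĩ})) is jointly concave on ℝ × (−∞, ln I(1/2)). -/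
open Real


noncomputable def Ifun (β x : ℝ) : ℝ :=
  x * Real.log (x / β) + (1 - x) * Real.log ((1 - x) / (1 - β))

noncomputable def Dfun (β x : ℝ) : ℝ :=
  Real.log (x / β) - Real.log ((1 - x) / (1 - β))

lemma hasDerivAt_Ifun {β x : ℝ} (hβ0 : 0 < β) (hβ1 : β < 1) (hx0 : 0 < x) (hx1 : x < 1) :
    HasDerivAt (Ifun β) (Dfun β x) x := by
  have h1x : (0:ℝ) < 1 - x := by linarith
  have h1β : (0:ℝ) < 1 - β := by linarith
  have hd1 : HasDerivAt (fun y : ℝ => y / β) (1 / β) x := by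
    simpa using (hasDerivAt_id x).div_const β
  have hlog1 : HasDerivAt (fun y : ℝ => Real.log (y / β)) (1 / x) x := by
    have := (Real.hasDerivAt_log (by positivity : x / β ≠ 0)).comp x hd1
    refine this.congr_deriv ?_
    field_simp
  have hd2 : HasDerivAt (fun y : ℝ => (1 - y) / (1 - β)) (-1 / (1 - β)) x := by
    simpa using (((hasDerivAt_id x).const_sub 1).div_const (1 - β))
  have hlog2 : HasDerivAt (fun y : ℝ => Real.log ((1 - y) / (1 - β))) (-(1 / (1 - x))) x := by
    have := (Real.hasDerivAt_log (by positivity : (1 - x) / (1 - β) ≠ 0)).comp x hd2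
    refine this.congr_deriv ?_
    field_simp
  have hA : HasDerivAt (fun y : ℝ => y * Real.log (y / β)) (Real.log (x / β) + 1) x := by
    have := (hasDerivAt_id x).mul hlog1
    refine this.congr_deriv ?_
    field_simp
    simp only [id_eq]
    ring
  have hB : HasDerivAt (fun y : ℝ => (1 - y) * Real.log ((1 - y) / (1 - β)))
      (-Real.log ((1 - x) / (1 - β)) - 1) x := by
    have := ((hasDerivAt_id x).const_sub 1).mul hlog2
    refine this.congr_deriv ?_
    field_simp
    simp only [id_eq]
    ring
  have h := hA.add hB
  unfold Ifun Dfun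
  refine h.congr_deriv ?_
  ring

lemma hasDerivAt_Dfun {β x : ℝ} (hβ0 : 0 < β) (hβ1 : β < 1) (hx0 : 0 < x) (hx1 : x < 1) :
    HasDerivAt (Dfun β) (1 / (x * (1 - x))) x := by
  have h1x : (0:ℝ) < 1 - x := by linarith
  have h1β : (0:ℝ) < 1 - β := by linarith
  have hd1 : HasDerivAt (fun y : ℝ => y / β) (1 / β) x := by
    simpa using (hasDerivAt_id x).div_const β
  have hlog1 : HasDerivAt (fun y : ℝ => Real.log (y / β)) (1 / x) x := by
    have := (Real.hasDerivAt_log (by positivity : x / β ≠ 0)).comp x hd1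
    refine this.congr_deriv ?_
    field_simp
  have hd2 : HasDerivAt (fun y : ℝ => (1 - y) / (1 - β)) (-1 / (1 - β)) x := by
    simpa using (((hasDerivAt_id x).const_sub 1).div_const (1 - β))
  have hlog2 : HasDerivAt (fun y : ℝ => Real.log ((1 - y) / (1 - β))) (-(1 / (1 - x))) x := by
    have := (Real.hasDerivAt_log (by positivity : (1 - x) / (1 - β) ≠ 0)).comp x hd2
    refine this.congr_deriv ?_
    field_simp
  have h := hlog1.sub hlog2
  unfold Dfun
  refine h.congr_deriv ?_
  field_simp
  ring

lemma Ifun_beta {β : ℝ} (hβ0 : 0 < β) (hβ1 : β < 1) : Ifun β β = 0 := by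
  have h : (0:ℝ) < 1 - β := by linarith
  simp [Ifun, div_self hβ0.ne', div_self h.ne']

lemma Dfun_beta {β : ℝ} (hβ0 : 0 < β) (hβ1 : β < 1) : Dfun β β = 0 := by
  have h : (0:ℝ) < 1 - β := by linarith
  simp [Dfun, div_self hβ0.ne', div_self h.ne']

lemma Dfun_pos {β x : ℝ} (hβ0 : 0 < β) (hβx : β < x) (hx1 : x < 1) : 0 < Dfun β x := by
  have h1x : (0:ℝ) < 1 - x := by linarith
  have h1β : (0:ℝ) < 1 - β := by linarith
  have l1 : 0 < Real.log (x / β) := Real.log_pos ((one_lt_div hβ0).2 hβx)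
  have l2 : Real.log ((1 - x) / (1 - β)) < 0 :=
    Real.log_neg (by positivity) ((div_lt_one h1β).2 (by linarith))
  unfold Dfun; linarith

lemma Ifun_strictMono {β : ℝ} (hβ0 : 0 < β) (hβh : β < 1/2) :
    StrictMonoOn (Ifun β) (Set.Icc β (1/2)) := by
  have hcont : ContinuousOn (Ifun β) (Set.Icc β (1/2)) := fun y hy =>
    (hasDerivAt_Ifun hβ0 (by linarith) (lt_of_lt_of_le hβ0 hy.1)
      (by linarith [hy.2])).continuousAt.continuousWithinAt
  refine strictMonoOn_of_hasDerivWithinAt_pos (f' := fun y => Dfun β y) (convex_Icc _ _)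
    hcont (fun y hy => ?_) (fun y hy => ?_)
  · rw [interior_Icc] at hy
    exact (hasDerivAt_Ifun hβ0 (by linarith) (lt_trans hβ0 hy.1)
      (by linarith [hy.2])).hasDerivWithinAt
  · rw [interior_Icc] at hy
    exact Dfun_pos hβ0 hy.1 (by linarith [hy.2])

lemma Ifun_pos {β x : ℝ} (hβ0 : 0 < β) (hβh : β < 1/2) (hβx : β < x) (hx : x ≤ 1/2) :
    0 < Ifun β x := by
  have := Ifun_strictMono hβ0 hβh (Set.left_mem_Icc.2 (by linarith))
    (Set.mem_Icc.2 ⟨hβx.le, hx⟩) hβx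
  rwa [Ifun_beta hβ0 (by linarith)] at this

lemma stepA {β x : ℝ} (hβ0 : 0 < β) (hβx : β < x) (hx : x ≤ 1/2) :
    Ifun β x ≤ (x - β) * Dfun β x := by
  set h : ℝ → ℝ := fun t => (t - β) * Dfun β t - Ifun β t with hh
  have hd : ∀ t, 0 < t → t < 1 →
      HasDerivAt h ((t - β) * (1 / (t * (1 - t)))) t := by
    intro t ht0 ht1
    have h1 := ((hasDerivAt_id t).sub_const β).mul (hasDerivAt_Dfun hβ0 (by linarith) ht0 ht1)
    have h2 := h1.sub (hasDerivAt_Ifun hβ0 (by linarith) ht0 ht1)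
    simp only [id_eq] at h2
    refine h2.congr_deriv ?_
    ring
  have hmono : MonotoneOn h (Set.Icc β x) := by
    refine monotoneOn_of_hasDerivWithinAt_nonneg
      (f' := fun t => (t - β) * (1 / (t * (1 - t)))) (convex_Icc _ _)
      (fun t ht => ?_) (fun t ht => ?_) (fun t ht => ?_)
    · exact (hd t (lt_of_lt_of_le hβ0 ht.1) (by linarith [ht.2])).continuousAt.continuousWithinAt
    · rw [interior_Icc] at ht
      exact (hd t (lt_trans hβ0 ht.1) (by linarith [ht.2])).hasDerivWithinAt
    · rw [interior_Icc] at ht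
      have ht0 : 0 < t := lt_trans hβ0 ht.1
      have ht1 : t < 1 := by linarith [ht.2]
      have : 0 < t * (1 - t) := by nlinarith
      have : 0 ≤ 1 / (t * (1 - t)) := by positivity
      nlinarith [ht.1]
  have h0 : h β = 0 := by
    simp [hh, Ifun_beta hβ0 (by linarith), Dfun_beta hβ0 (by linarith)]
  have := hmono (Set.left_mem_Icc.2 hβx.le) (Set.mem_Icc.2 ⟨hβx.le, le_refl x⟩) hβx.le
  rw [h0] at this
  simp only [hh] at this
  linarith

lemma stepB {β x : ℝ} (hβ0 : 0 < β) (hβx : β < x) (hx : x ≤ 1/2) :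
    x - β ≤ x * (1 - x) * Dfun β x := by
  have hx0 : 0 < x := lt_trans hβ0 hβx
  have hx1 : x < 1 := by linarith
  have hxx : 0 < x * (1 - x) := by nlinarith
  set g : ℝ → ℝ := fun t => Dfun β t - (t - β) * (1 / (x * (1 - x))) with hg
  have hd : ∀ t, 0 < t → t < 1 →
      HasDerivAt g (1 / (t * (1 - t)) - 1 / (x * (1 - x))) t := by
    intro t ht0 ht1
    have h1 := (hasDerivAt_Dfun hβ0 (by linarith) ht0 ht1).sub
      (((hasDerivAt_id t).sub_const β).mul_const (1 / (x * (1 - x))))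
    simp only [id_eq] at h1
    refine h1.congr_deriv ?_
    ring
  have hmono : MonotoneOn g (Set.Icc β x) := by
    refine monotoneOn_of_hasDerivWithinAt_nonneg
      (f' := fun t => 1 / (t * (1 - t)) - 1 / (x * (1 - x))) (convex_Icc _ _)
      (fun t ht => ?_) (fun t ht => ?_) (fun t ht => ?_)
    · exact (hd t (lt_of_lt_of_le hβ0 ht.1) (by linarith [ht.2])).continuousAt.continuousWithinAt
    · rw [interior_Icc] at ht
      exact (hd t (lt_trans hβ0 ht.1) (by linarith [ht.2])).hasDerivWithinAt
    · rw [interior_Icc] at ht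
      have ht0 : 0 < t := lt_trans hβ0 ht.1
      have htx : t < x := ht.2
      have htt : 0 < t * (1 - t) := by nlinarith
      have hle : t * (1 - t) ≤ x * (1 - x) := by nlinarith
      have := one_div_le_one_div_of_le htt hle
      linarith
  have h0 : g β = 0 := by simp [hg, Dfun_beta hβ0 (by linarith)]
  have := hmono (Set.left_mem_Icc.2 hβx.le) (Set.mem_Icc.2 ⟨hβx.le, le_refl x⟩) hβx.le
  rw [h0] at this
  simp only [hg] at this
  have h2 : (x - β) * (1 / (x * (1 - x))) ≤ Dfun β x := by linarith
  calc x - β = (x - β) * (1 / (x * (1 - x))) * (x * (1 - x)) := by field_simp [show (1:ℝ) - x ≠ 0 by linarith]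
    _ ≤ Dfun β x * (x * (1 - x)) := by nlinarith
    _ = x * (1 - x) * Dfun β x := by ring

lemma key_ineq {β x : ℝ} (hβ0 : 0 < β) (hβx : β < x) (hx : x ≤ 1/2) :
    Ifun β x ≤ x * (1 - x) * (Dfun β x)^2 := by
  have hA := stepA hβ0 hβx hx
  have hB := stepB hβ0 hβx hx
  have hD := Dfun_pos hβ0 hβx (by linarith)
  nlinarith

lemma psi_concave {β : ℝ} (hβ0 : 0 < β) (hβh : β < 1/2) :
    ConcaveOn ℝ (Set.Iio (Real.log (1 - 2*β)))
      (fun u => Real.log (Ifun β ((1 - Real.exp u)/2))) := by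
  have h2β : (0:ℝ) < 1 - 2*β := by linarith
  have hβ1 : β < 1 := by linarith
  set X : ℝ → ℝ := fun u => (1 - Real.exp u)/2 with hX
  have hXd : ∀ u : ℝ, HasDerivAt X (-(Real.exp u)/2) u := fun u => by
    simpa using ((hasDerivAt_const u (1:ℝ)).sub (Real.hasDerivAt_exp u)).div_const 2
  have hmem : ∀ u ∈ Set.Iio (Real.log (1 - 2*β)), β < X u ∧ X u < 1/2 := by
    intro u hu
    have he : Real.exp u < 1 - 2*β := by
      have := Real.exp_lt_exp.2 hu
      rwa [Real.exp_log h2β] at this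
    have he0 : 0 < Real.exp u := Real.exp_pos u
    constructor
    · show β < (1 - Real.exp u)/2; linarith
    · show (1 - Real.exp u)/2 < 1/2; linarith
  have hfd : ∀ u ∈ Set.Iio (Real.log (1 - 2*β)),
      HasDerivAt (fun u => Real.log (Ifun β (X u)))
        (-(Real.exp u)/2 * Dfun β (X u) / Ifun β (X u)) u := by
    intro u hu
    obtain ⟨hb, hh⟩ := hmem u hu
    have hx0 : 0 < X u := lt_trans hβ0 hb
    have hx1 : X u < 1 := by linarith
    have hIpos : 0 < Ifun β (X u) := Ifun_pos hβ0 hβh hb hh.le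
    have hIX := HasDerivAt.comp u (hasDerivAt_Ifun hβ0 hβ1 hx0 hx1) (hXd u)
    have hlog := HasDerivAt.comp u (Real.hasDerivAt_log hIpos.ne') hIX
    simp only [Function.comp_def] at hlog
    refine hlog.congr_deriv ?_
    field_simp
  refine concaveOn_of_hasDerivWithinAt2_nonpos (convex_Iio _)
    (f' := fun u => -(Real.exp u)/2 * Dfun β (X u) / Ifun β (X u))
    (f'' := fun u =>
      ((-(Real.exp u)/2 * Dfun β (X u) +
          -(Real.exp u)/2 * (1/(X u * (1 - X u)) * (-(Real.exp u)/2))) * Ifun β (X u) -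
        -(Real.exp u)/2 * Dfun β (X u) * (Dfun β (X u) * (-(Real.exp u)/2))) /
        Ifun β (X u) ^ 2)
    (fun u hu => (hfd u hu).continuousAt.continuousWithinAt) ?_ ?_ ?_
  · rw [interior_Iio]
    exact fun u hu => (hfd u hu).hasDerivWithinAt
  · rw [interior_Iio]
    intro u hu
    obtain ⟨hb, hh⟩ := hmem u hu
    have hx0 : 0 < X u := lt_trans hβ0 hb
    have hx1 : X u < 1 := by linarith
    have hIpos : 0 < Ifun β (X u) := Ifun_pos hβ0 hβh hb hh.le
    have h1 : HasDerivAt (fun u : ℝ => -(Real.exp u)/2) (-(Real.exp u)/2) u :=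
      (Real.hasDerivAt_exp u).neg.div_const 2
    have h2 : HasDerivAt (fun u => Dfun β (X u)) (1/(X u * (1 - X u)) * (-(Real.exp u)/2)) u := by
      have := HasDerivAt.comp u (hasDerivAt_Dfun hβ0 hβ1 hx0 hx1) (hXd u)
      simpa [Function.comp_def] using this
    have h3 : HasDerivAt (fun u => Ifun β (X u)) (Dfun β (X u) * (-(Real.exp u)/2)) u := by
      have := HasDerivAt.comp u (hasDerivAt_Ifun hβ0 hβ1 hx0 hx1) (hXd u)
      simpa [Function.comp_def] using this
    exact ((h1.mul h2).div h3 hIpos.ne').hasDerivWithinAt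
  · rw [interior_Iio]
    intro u hu
    obtain ⟨hb, hh⟩ := hmem u hu
    have hx0 : 0 < X u := lt_trans hβ0 hb
    have hx1 : X u < 1 := by linarith
    have hIpos : 0 < Ifun β (X u) := Ifun_pos hβ0 hβh hb hh.le
    have hDpos : 0 < Dfun β (X u) := Dfun_pos hβ0 hb hx1
    have hE : 0 < Real.exp u := Real.exp_pos u
    have hXX : 0 < X u * (1 - X u) := by nlinarith
    have hkey : 1/(X u * (1 - X u)) * Ifun β (X u) ≤ (Dfun β (X u))^2 := by
      rw [div_mul_eq_mul_div, div_le_iff₀ hXX]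
      nlinarith [key_ineq hβ0 hb hh.le]
    apply div_nonpos_of_nonpos_of_nonneg _ (sq_nonneg _)
    nlinarith [mul_pos (mul_pos hE hDpos) hIpos, sq_nonneg (Real.exp u)]

lemma g2_concave {β : ℝ} (hβ0 : 0 < β) (hβh : β < 1/2) (xinv : ℝ → ℝ)
    (hxinv : ∀ It ∈ Set.Iio (Real.log (Ifun β (1/2))),
      xinv It ∈ Set.Ioo β (1/2) ∧ Ifun β (xinv It) = Real.exp It) :
    ConcaveOn ℝ (Set.Iio (Real.log (Ifun β (1/2))))
      (fun It => Real.log (1 - 2 * xinv It)) := by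
  have h2β : (0:ℝ) < 1 - 2*β := by linarith
  refine ⟨convex_Iio _, ?_⟩
  intro p hp q hq θ σ hθ hσ hθσ
  simp only [smul_eq_mul]
  have hc : θ * p + σ * q ∈ Set.Iio (Real.log (Ifun β (1/2))) :=
    (convex_Iio _) hp hq hθ hσ hθσ
  obtain ⟨hxp, hIp⟩ := hxinv p hp
  obtain ⟨hxq, hIq⟩ := hxinv q hq
  obtain ⟨hxc, hIc⟩ := hxinv _ hc
  have h0p : 0 < 1 - 2 * xinv p := by linarith [hxp.2]
  have h0q : 0 < 1 - 2 * xinv q := by linarith [hxq.2]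
  set ua := Real.log (1 - 2 * xinv p) with hua
  set ub := Real.log (1 - 2 * xinv q) with hub
  have huam : ua ∈ Set.Iio (Real.log (1 - 2*β)) :=
    Real.log_lt_log h0p (by linarith [hxp.1])
  have hubm : ub ∈ Set.Iio (Real.log (1 - 2*β)) :=
    Real.log_lt_log h0q (by linarith [hxq.1])
  have hψ := (psi_concave hβ0 hβh).2 huam hubm hθ hσ hθσ
  simp only [smul_eq_mul] at hψ
  rw [Real.exp_log h0p, Real.exp_log h0q] at hψ
  have e1 : (1 - (1 - 2 * xinv p))/2 = xinv p := by ring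
  have e2 : (1 - (1 - 2 * xinv q))/2 = xinv q := by ring
  rw [e1, e2, hIp, hIq, Real.log_exp, Real.log_exp] at hψ
  -- hψ : θ * p + σ * q ≤ log (Ifun β ((1 - exp (θ*ua+σ*ub))/2))
  set xs : ℝ := (1 - Real.exp (θ * ua + σ * ub))/2 with hxs
  have hum : θ * ua + σ * ub < Real.log (1 - 2*β) := (convex_Iio _) huam hubm hθ hσ hθσ
  have heu : Real.exp (θ * ua + σ * ub) < 1 - 2*β := by
    have := Real.exp_lt_exp.2 hum
    rwa [Real.exp_log h2β] at this
  have heu0 : 0 < Real.exp (θ * ua + σ * ub) := Real.exp_pos _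
  have hxsb : β < xs := by rw [hxs]; linarith
  have hxsh : xs < 1/2 := by rw [hxs]; linarith
  have hIxs : 0 < Ifun β xs := Ifun_pos hβ0 hβh hxsb hxsh.le
  have hle : Ifun β (xinv (θ * p + σ * q)) ≤ Ifun β xs := by
    rw [hIc]
    calc Real.exp (θ * p + σ * q) ≤ Real.exp (Real.log (Ifun β xs)) := Real.exp_le_exp.2 hψ
      _ = Ifun β xs := Real.exp_log hIxs
  have hxcle : xinv (θ * p + σ * q) ≤ xs := by
    have hm1 : xinv (θ * p + σ * q) ∈ Set.Icc β (1/2) := ⟨hxc.1.le, hxc.2.le⟩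
    have hm2 : xs ∈ Set.Icc β (1/2) := ⟨hxsb.le, hxsh.le⟩
    exact ((Ifun_strictMono hβ0 hβh).le_iff_le hm1 hm2).1 hle
  have hfin : Real.exp (θ * ua + σ * ub) ≤ 1 - 2 * xinv (θ * p + σ * q) := by
    rw [hxs] at hxcle; linarith
  calc θ * ua + σ * ub = Real.log (Real.exp (θ * ua + σ * ub)) := (Real.log_exp _).symm
    _ ≤ Real.log (1 - 2 * xinv (θ * p + σ * q)) := Real.log_le_log (Real.exp_pos _) hfin

lemma g3_concave {D : ℝ} (hD : 0 < D) :
    ConcaveOn ℝ Set.univ (fun t => Real.log (1 - Real.exp (-(D * Real.exp t)))) := by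
  have hS : ∀ t : ℝ, HasDerivAt (fun t => D * Real.exp t) (D * Real.exp t) t :=
    fun t => (Real.hasDerivAt_exp t).const_mul D
  have hE : ∀ t : ℝ, HasDerivAt (fun t => Real.exp (-(D * Real.exp t)))
      (Real.exp (-(D * Real.exp t)) * -(D * Real.exp t)) t := by
    intro t
    have := HasDerivAt.comp t (Real.hasDerivAt_exp (-(D * Real.exp t))) (hS t).neg
    simpa [Function.comp_def] using this
  have hM : ∀ t : ℝ, HasDerivAt (fun t => 1 - Real.exp (-(D * Real.exp t)))
      (-(Real.exp (-(D * Real.exp t)) * -(D * Real.exp t))) t :=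
    fun t => (hE t).const_sub 1
  have hMpos : ∀ t : ℝ, 0 < 1 - Real.exp (-(D * Real.exp t)) := by
    intro t
    have : Real.exp (-(D * Real.exp t)) < 1 := by
      apply Real.exp_lt_one_iff.2
      have := Real.exp_pos t
      nlinarith
    linarith
  have hfd : ∀ t : ℝ, HasDerivAt (fun t => Real.log (1 - Real.exp (-(D * Real.exp t))))
      (D * Real.exp t * Real.exp (-(D * Real.exp t)) / (1 - Real.exp (-(D * Real.exp t)))) t := by
    intro t
    have := HasDerivAt.comp t (Real.hasDerivAt_log (hMpos t).ne') (hM t)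
    simp only [Function.comp_def] at this
    refine this.congr_deriv ?_
    field_simp
  refine concaveOn_of_hasDerivWithinAt2_nonpos convex_univ
    (f' := fun t => D * Real.exp t * Real.exp (-(D * Real.exp t)) /
      (1 - Real.exp (-(D * Real.exp t))))
    (f'' := fun t =>
      ((D * Real.exp t * Real.exp (-(D * Real.exp t)) +
          D * Real.exp t * (Real.exp (-(D * Real.exp t)) * -(D * Real.exp t))) *
            (1 - Real.exp (-(D * Real.exp t))) -
        D * Real.exp t * Real.exp (-(D * Real.exp t)) *
          -(Real.exp (-(D * Real.exp t)) * -(D * Real.exp t))) /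
        (1 - Real.exp (-(D * Real.exp t))) ^ 2)
    (fun t _ => (hfd t).continuousAt.continuousWithinAt) ?_ ?_ ?_
  · intro t _
    exact (hfd t).hasDerivWithinAt
  · intro t _
    exact (((hS t).mul (hE t)).div (hM t) (hMpos t).ne').hasDerivWithinAt
  · intro t _
    apply div_nonpos_of_nonpos_of_nonneg _ (sq_nonneg _)
    have hs : 0 < D * Real.exp t := by positivity
    have hq : 0 < Real.exp (-(D * Real.exp t)) := Real.exp_pos _
    have hb : -(D * Real.exp t) + 1 ≤ Real.exp (-(D * Real.exp t)) := Real.add_one_le_exp _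
    nlinarith [mul_pos hs hq]

/-- Lemma 4 of the paper: in log-transformed coordinates `(ñ, Ĩ)`, the per-flow utility
term `ñ + ln(1 − 2·x(Ĩ)) + ln(1 − exp(−D·e^{ñ+Ĩ}))` is jointly concave on
`ℝ × (−∞, ln I(1/2))`, where `x(Ĩ) = I⁻¹(e^Ĩ)` and `I` is the Bernoulli KL divergence. -/
theorem stmt_14 (β D : ℝ) (hβ : β ∈ Set.Ioo (0 : ℝ) (1 / 2)) (hD : 0 < D)
    (I : ℝ → ℝ)
    (hI : ∀ x, I x = x * Real.log (x / β) + (1 - x) * Real.log ((1 - x) / (1 - β)))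
    (xinv : ℝ → ℝ)
    (hxinv : ∀ It ∈ Set.Iio (Real.log (I (1 / 2))),
      xinv It ∈ Set.Ioo β (1 / 2) ∧ I (xinv It) = Real.exp It) :
    ConcaveOn ℝ (Set.univ ×ˢ Set.Iio (Real.log (I (1 / 2))))
      (fun p : ℝ × ℝ =>
        p.1 + Real.log (1 - 2 * xinv p.2) +
          Real.log (1 - Real.exp (-(D * Real.exp (p.1 + p.2))))) := by
  obtain ⟨hβ0, hβh⟩ := hβ
  have hIf : I = Ifun β := funext fun x => hI x
  subst hIf
  have hg2 := g2_concave hβ0 hβh xinv hxinv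
  have hg3 := g3_concave hD
  refine ⟨convex_univ.prod (convex_Iio _), ?_⟩
  intro p hp q hq θ σ hθ hσ hθσ
  have h2 := hg2.2 hp.2 hq.2 hθ hσ hθσ
  have h3 := hg3.2 (Set.mem_univ (p.1 + p.2)) (Set.mem_univ (q.1 + q.2)) hθ hσ hθσ
  simp only [smul_eq_mul] at h2 h3 ⊢
  simp only [Prod.fst_add, Prod.snd_add, Prod.smul_fst, Prod.smul_snd, smul_eq_mul]
  have harg : θ * (p.1 + p.2) + σ * (q.1 + q.2) =
      (θ * p.1 + σ * q.1) + (θ * p.2 + σ * q.2) := by ring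
  rw [harg] at h3
  linarith
end
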